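/- Let G be a finite group with a normal subgroup S such that S is a nonabelian simple group and the quotient G/S is solvable. Let H be a subgroup of G and suppose S occurs as a section of H, i.e. there exist subgroups K₁ ⊴ K₂ ≤ H with K₂/K₁ isomorphic to S. Then S ≤ H. -/

import Mathlib

/-- Let `G` be finite with `S ⊴ G` nonabelian simple and `G/S` solvable.
If a subgroup `H ≤ G` has `S` as a section (there are `K₁ ⊴ K₂ ≤ H` with `K₂/K₁ ≅ S`),
then `S ≤ H`. -/
theorem socle_le_of_section_iso_socle (G : Type) [Group G] [Fintype G]
    (S : Subgroup G) [hN : S.Normal]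
    (hsimple : IsSimpleGroup S)
    (hnonab : ∃ x y : S, x * y ≠ y * x)
    (hsolv : IsSolvable (G ⧸ S))
    (H K₁ K₂ : Subgroup G) (hK₂H : K₂ ≤ H) (hK₁K₂ : K₁ ≤ K₂)
    [hnorm : (K₁.subgroupOf K₂).Normal]
    (hiso : Nonempty ((K₂ ⧸ K₁.subgroupOf K₂) ≃* S)) :
    S ≤ H := by
  classical
  obtain ⟨e⟩ := hiso
  haveI : Nontrivial (K₂ ⧸ K₁.subgroupOf K₂) := e.toEquiv.nontrivial
  haveI hQs : IsSimpleGroup (K₂ ⧸ K₁.subgroupOf K₂) :=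
    IsSimpleGroup.isSimpleGroup_of_surjective e.symm.toMonoidHom e.symm.surjective
  have hQnotsolv : ¬ IsSolvable (K₂ ⧸ K₁.subgroupOf K₂) := by
    intro h
    haveI : Group.IsSolvable (K₂ ⧸ K₁.subgroupOf K₂) := h
    haveI : IsSolvable S := solvable_of_surjective (f := e.toMonoidHom) e.surjective
    obtain ⟨x, y, hxy⟩ := hnonab
    exact hxy (IsSimpleGroup.comm_iff_isSolvable.mpr this x y)
  set f : K₂ →* G ⧸ S := (QuotientGroup.mk' S).comp K₂.subtype with hf
  have hker : f.ker = S.subgroupOf K₂ := by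
    ext x
    simp [f, MonoidHom.mem_ker, QuotientGroup.eq_one_iff, Subgroup.mem_subgroupOf]
  haveI : Group.IsSolvable (G ⧸ S) := hsolv
  haveI hsolv1 : Group.IsSolvable (K₂ ⧸ f.ker) :=
    solvable_of_solvable_injective (QuotientGroup.kerLift_injective f)
  haveI hsolv2 : Group.IsSolvable (K₂ ⧸ S.subgroupOf K₂) :=
    solvable_of_surjective (f := (QuotientGroup.quotientMulEquivOfEq hker).toMonoidHom)
      (QuotientGroup.quotientMulEquivOfEq hker).surjective
  haveI hSnorm : (S.subgroupOf K₂).Normal := hN.subgroupOf K₂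
  set N := (S.subgroupOf K₂).map (QuotientGroup.mk' (K₁.subgroupOf K₂)) with hNdef
  have hNnorm : N.Normal := hSnorm.map _ (QuotientGroup.mk'_surjective _)
  rcases hNnorm.eq_bot_or_eq_top with hbot | htop
  · exfalso
    have hle : S.subgroupOf K₂ ≤ K₁.subgroupOf K₂ := by
      intro x hx
      have hm : QuotientGroup.mk' (K₁.subgroupOf K₂) x ∈ N :=
        Subgroup.mem_map_of_mem _ hx
      rw [hbot, Subgroup.mem_bot] at hm
      exact (QuotientGroup.eq_one_iff x).mp hm
    apply hQnotsolv
    have hsurj : Function.Surjective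
        (QuotientGroup.map (S.subgroupOf K₂) (K₁.subgroupOf K₂) (MonoidHom.id K₂) hle) := by
      intro q
      obtain ⟨x, rfl⟩ := QuotientGroup.mk_surjective q
      exact ⟨QuotientGroup.mk x, rfl⟩
    exact solvable_of_surjective hsurj
  · have hsurj : Function.Surjective
        (fun x : S.subgroupOf K₂ => (QuotientGroup.mk x.1 : K₂ ⧸ K₁.subgroupOf K₂)) := by
      intro q
      have hq : q ∈ N := htop ▸ Subgroup.mem_top q
      obtain ⟨x, hx, hxq⟩ := hq
      exact ⟨⟨x, hx⟩, hxq⟩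
    have h1 : Nat.card (K₂ ⧸ K₁.subgroupOf K₂) ≤ Nat.card (S.subgroupOf K₂) :=
      Nat.card_le_card_of_surjective _ hsurj
    have h2 : Nat.card S = Nat.card (K₂ ⧸ K₁.subgroupOf K₂) :=
      (Nat.card_congr e.toEquiv).symm
    have h3 : Nat.card (S.subgroupOf K₂) = Nat.card ((S ⊓ K₂ : Subgroup G)) := by
      rw [← Subgroup.inf_subgroupOf_right S K₂]
      exact Nat.card_congr (Subgroup.subgroupOfEquivOfLe inf_le_right).toEquiv
    have hcard : Nat.card S ≤ Nat.card ((S ⊓ K₂ : Subgroup G)) := by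
      rw [h2, ← h3]; exact h1
    have heq : S ⊓ K₂ = S := Subgroup.eq_of_le_of_card_ge inf_le_left hcard
    have hSK : S ≤ K₂ := inf_eq_left.mp heq
    exact hSK.trans hK₂H
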